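/- A stability condition σ on a Krull–Schmidt triangulated category D is totally semistable (every indecomposable object is semistable) if and only if gldim σ ≤ 1. -/

import Mathlib

open CategoryTheory CategoryTheory.Limits CategoryTheory.Pretriangulated

universe v u

variable (C : Type u) [Category.{v} C] [Preadditive C] [HasZeroObject C]
  [HasShift C ℤ] [∀ n : ℤ, (shiftFunctor C n).Additive] [Pretriangulated C]
  [HasFiniteBiproducts C]

/-- A Bridgeland stability condition, encoded by a central charge on objects and a slicing. -/
structure StabilityCondition where
  Z : C → ℂ
  P : ℝ → Set C
  mem_of_iso : ∀ {φ : ℝ} {E F : C}, (E ≅ F) → E ∈ P φ → F ∈ P φ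
  charge : ∀ {φ : ℝ} {E : C}, E ∈ P φ → ¬ IsZero E →
    ∃ m : ℝ, 0 < m ∧ Z E = (m : ℂ) * Complex.exp (Real.pi * φ * Complex.I)
  shift_mem : ∀ (φ : ℝ) (E : C), E ∈ P φ ↔ E⟦(1 : ℤ)⟧ ∈ P (φ + 1)
  sum_mem : ∀ {φ : ℝ} {X Y : C}, X ∈ P φ → Y ∈ P φ → (X ⊞ Y) ∈ P φ
  summand_mem : ∀ {φ : ℝ} {X Y : C}, (X ⊞ Y) ∈ P φ → X ∈ P φ
  hom_zero : ∀ {φ₁ φ₂ : ℝ}, φ₂ < φ₁ → ∀ {E F : C}, E ∈ P φ₁ → F ∈ P φ₂ →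
    ∀ f : E ⟶ F, f = 0
  HN : ∀ E : C, ¬ IsZero E → ∃ (n : ℕ) (obj : Fin (n + 1) → C) (φ : Fin n → ℝ),
    IsZero (obj 0) ∧ Nonempty (obj (Fin.last n) ≅ E) ∧ StrictAnti φ ∧
    ∀ i : Fin n, ∃ (A : C) (f : obj i.castSucc ⟶ obj i.succ) (g : obj i.succ ⟶ A)
      (h : A ⟶ (obj i.castSucc)⟦(1 : ℤ)⟧),
      (Triangle.mk f g h ∈ distTriang C) ∧ A ∈ P (φ i) ∧ ¬ IsZero A

variable {C}

/-- `E` is semistable iff it lies in some slice. -/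
def StabilityCondition.IsSemistable (σ : StabilityCondition C) (E : C) : Prop :=
  ∃ φ : ℝ, E ∈ σ.P φ

/-- The global dimension of a stability condition. -/
noncomputable def StabilityCondition.gldim (σ : StabilityCondition C) : EReal :=
  sSup {d : EReal | ∃ (φ₁ φ₂ : ℝ) (E F : C) (f : E ⟶ F),
    E ∈ σ.P φ₁ ∧ F ∈ σ.P φ₂ ∧ f ≠ 0 ∧ d = ((φ₂ - φ₁ : ℝ) : EReal)}

/-- An object is indecomposable if it is nonzero and any biproduct decomposition is trivial. -/
def IsIndec (E : C) : Prop :=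
  ¬ IsZero E ∧ ∀ (X Y : C), (E ≅ X ⊞ Y) → IsZero X ∨ IsZero Y

/-- `E` is stable of phase `φ`: it is a nonzero object of `P(φ)` admitting no nontrivial
extension decomposition inside `P(φ)` (i.e. it is simple in the abelian category `P(φ)`). -/
def StabilityCondition.IsStableOfPhase (σ : StabilityCondition C) (E : C) (φ : ℝ) : Prop :=
  E ∈ σ.P φ ∧ ¬ IsZero E ∧ ∀ (A B : C) (f : A ⟶ E) (g : E ⟶ B) (h : B ⟶ A⟦(1 : ℤ)⟧),
    (Triangle.mk f g h ∈ distTriang C) → A ∈ σ.P φ → B ∈ σ.P φ →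
    ¬ IsZero A → ¬ IsZero B → False

/-- The Krull–Schmidt property: every nonzero object is a finite biproduct of indecomposables. -/
def KrullSchmidt : Prop :=
  ∀ X : C, ¬ IsZero X → ∃ (m : ℕ) (f : Fin m → C),
    (∀ i, IsIndec (f i)) ∧ Nonempty (X ≅ ⨁ f)

section AuxLemmas

lemma StabilityCondition.hom_zero_of_gldim_le_one (σ : StabilityCondition C)
    (hσ : σ.gldim ≤ 1) {φ₁ φ₂ : ℝ} {E F : C} (hE : E ∈ σ.P φ₁) (hF : F ∈ σ.P φ₂)
    (hgap : 1 < φ₂ - φ₁) (f : E ⟶ F) : f = 0 := by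
  by_contra hf
  have hmem : ((φ₂ - φ₁ : ℝ) : EReal) ∈ {d : EReal | ∃ (φ₁ φ₂ : ℝ) (E F : C) (f : E ⟶ F),
      E ∈ σ.P φ₁ ∧ F ∈ σ.P φ₂ ∧ f ≠ 0 ∧ d = ((φ₂ - φ₁ : ℝ) : EReal)} :=
    ⟨φ₁, φ₂, E, F, f, hE, hF, hf, rfl⟩
  have h1 : ((φ₂ - φ₁ : ℝ) : EReal) ≤ 1 := (le_sSup hmem).trans hσ
  rw [show (1 : EReal) = ((1 : ℝ) : EReal) by norm_cast, EReal.coe_le_coe_iff] at h1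
  linarith

/-- A distinguished triangle with zero connecting map splits. -/
lemma nonempty_iso_biprod_of_mor₃_zero {T : Triangle C} (hT : T ∈ distTriang C)
    (h3 : T.mor₃ = 0) : Nonempty (T.obj₂ ≅ T.obj₁ ⊞ T.obj₃) := by
  obtain ⟨s, hs⟩ := Triangle.coyoneda_exact₃ T hT (𝟙 T.obj₃) (by rw [h3, comp_zero])
  let ψ : binaryBiproductTriangle T.obj₁ T.obj₃ ⟶ T :=
    { hom₁ := 𝟙 _
      hom₂ := biprod.desc T.mor₁ s
      hom₃ := 𝟙 _
      comm₁ := by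
        show biprod.inl ≫ biprod.desc T.mor₁ s = 𝟙 T.obj₁ ≫ T.mor₁
        simp
      comm₂ := by
        show biprod.snd ≫ 𝟙 T.obj₃ = biprod.desc T.mor₁ s ≫ T.mor₂
        apply biprod.hom_ext' <;> simp [comp_distTriang_mor_zero₁₂ T hT, ← hs]
      comm₃ := by
        show (0 : _ ⟶ T.obj₁⟦(1 : ℤ)⟧) ≫ (shiftFunctor C (1 : ℤ)).map (𝟙 T.obj₁) = 𝟙 T.obj₃ ≫ T.mor₃
        simp [h3] }
  have : IsIso ψ.hom₂ := by
    apply isIso₂_of_isIso₁₃ ψ (binaryBiproductTriangle_distinguished _ _) hT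
    · exact (inferInstance : IsIso (𝟙 T.obj₁))
    · exact (inferInstance : IsIso (𝟙 T.obj₃))
  exact ⟨(asIso ψ.hom₂).symm⟩

lemma nonempty_iso_biprod_left_zero {X Y : C} (hX : IsZero X) : Nonempty (Y ≅ X ⊞ Y) := by
  refine ⟨⟨biprod.inr, biprod.snd, by simp, ?_⟩⟩
  apply biprod.hom_ext' <;> simp
  exact hX.eq_of_src 0 biprod.inl


/-- Core of the "if" direction: small global dimension forces indecomposables semistable. -/
lemma StabilityCondition.semistable_of_gldim_le_one (σ : StabilityCondition C)
    (hσ : σ.gldim ≤ 1) {E : C} (hE : IsIndec E) : σ.IsSemistable E := by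
  obtain ⟨n, obj, φ, h0, ⟨eiso⟩, hφ, htri⟩ := σ.HN E hE.1
  cases n with
  | zero => exact absurd (h0.of_iso eiso.symm) hE.1
  | succ m =>
    obtain ⟨A, f, g, h, hT, hA, hAnz⟩ := htri (Fin.last m)
    have key : ∀ k : ℕ, ∀ hk : k < m + 2, k ≤ m →
        ∀ a : A ⟶ (obj ⟨k, hk⟩)⟦(1 : ℤ)⟧, a = 0 := by
      intro k
      induction k with
      | zero =>
        intro hk _ a
        have hz : IsZero ((obj ⟨0, hk⟩)⟦(1 : ℤ)⟧) := by
          rw [show (⟨0, hk⟩ : Fin (m + 2)) = 0 from Fin.ext (by simp)]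
          exact (shiftFunctor C (1 : ℤ)).map_isZero h0
        exact hz.eq_of_tgt a 0
      | succ k ih =>
        intro hk hkm a
        obtain ⟨A', f', g', h', hT', hA', _⟩ := htri ⟨k, by omega⟩
        have hA1 : A'⟦(1 : ℤ)⟧ ∈ σ.P (φ ⟨k, by omega⟩ + 1) := (σ.shift_mem _ _).1 hA'
        have hflt : φ (Fin.last m) < φ ⟨k, by omega⟩ := hφ (by simp [Fin.lt_def]; omega)
        have hzero : a ≫ ((Triangle.mk f' g' h').rotate.mor₁)⟦(1 : ℤ)⟧' = 0 :=
          σ.hom_zero_of_gldim_le_one hσ hA hA1 (by linarith) _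
        obtain ⟨b, hb⟩ :=
          Triangle.coyoneda_exact₁ _ (rot_of_distTriang _ hT') a hzero
        have hb0 : b = 0 := ih (by omega) (by omega) b
        rw [hb, hb0, zero_comp]
        rfl
    have hh0 : h = 0 := key m (by omega) le_rfl h
    obtain ⟨e⟩ := nonempty_iso_biprod_of_mor₃_zero hT hh0
    have hEiso : E ≅ obj ((Fin.last m).castSucc) ⊞ A := eiso.symm.trans e
    rcases hE.2 _ _ hEiso with hX | hX
    · obtain ⟨e'⟩ := nonempty_iso_biprod_left_zero (Y := A) hX
      exact ⟨φ (Fin.last m), σ.mem_of_iso (e'.trans hEiso.symm) hA⟩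
    · exact absurd hX hAnz

/-- Core of the "only if" direction. -/
lemma StabilityCondition.hom_zero_of_totally_semistable (hKS : KrullSchmidt (C := C))
    (σ : StabilityCondition C) (hss : ∀ E : C, IsIndec E → σ.IsSemistable E)
    {φ₁ φ₂ : ℝ} {E F : C} (hE : E ∈ σ.P φ₁) (hF : F ∈ σ.P φ₂)
    (hgap : 1 < φ₂ - φ₁) (f : E ⟶ F) : f = 0 := by
  obtain ⟨G, g, h, hT⟩ := Pretriangulated.distinguished_cocone_triangle f
  have hE1 : E⟦(1 : ℤ)⟧ ∈ σ.P (φ₁ + 1) := (σ.shift_mem _ _).1 hE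
  have hF1 : F⟦(1 : ℤ)⟧ ∈ σ.P (φ₂ + 1) := (σ.shift_mem _ _).1 hF
  obtain ⟨w, hw⟩ : ∃ w : E⟦(1 : ℤ)⟧ ⟶ G, h = h ≫ w ≫ h := by
    by_cases hG : IsZero G
    · exact ⟨0, by rw [hG.eq_of_src h 0]; simp⟩
    · obtain ⟨m, Gf, hind, ⟨e⟩⟩ := hKS G hG
      choose ψ hψ using fun i => hss (Gf i) (hind i)
      have main : ∀ i : Fin m, ∃ v : E⟦(1 : ℤ)⟧ ⟶ Gf i,
          (e.hom ≫ biproduct.π Gf i) ≫ (biproduct.ι Gf i ≫ e.inv) ≫ h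
            = h ≫ (v ≫ biproduct.ι Gf i ≫ e.inv) ≫ h := by
        intro i
        rcases le_or_gt (ψ i) (φ₁ + 1) with hle | hlt
        · have hgp : (Triangle.mk f g h).mor₂ ≫ (e.hom ≫ biproduct.π Gf i) = 0 :=
            σ.hom_zero (lt_of_le_of_lt hle (by linarith)) hF (hψ i) _
          obtain ⟨v, hv⟩ := Triangle.yoneda_exact₃ _ hT _ hgp
          refine ⟨v, ?_⟩
          change e.hom ≫ biproduct.π Gf i = h ≫ v at hv
          rw [hv]
          erw [Category.assoc, Category.assoc, Category.assoc, Category.assoc]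
        · have hih : (biproduct.ι Gf i ≫ e.inv) ≫ h = 0 :=
            σ.hom_zero hlt (hψ i) hE1 _
          refine ⟨0, ?_⟩
          rw [hih]
          simp
      choose v hv using main
      refine ⟨∑ i, v i ≫ biproduct.ι Gf i ≫ e.inv, ?_⟩
      have htot : (𝟙 G : G ⟶ G) = ∑ i, (e.hom ≫ biproduct.π Gf i) ≫ (biproduct.ι Gf i ≫ e.inv) := by
        rw [← e.hom_inv_id]
        conv_lhs => rw [show e.hom ≫ e.inv = e.hom ≫ 𝟙 _ ≫ e.inv by simp,
          ← biproduct.total]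
        rw [Preadditive.sum_comp, Preadditive.comp_sum]
        simp [Category.assoc]
      calc h = (𝟙 G) ≫ h := by rw [Category.id_comp]
        _ = ∑ i, (e.hom ≫ biproduct.π Gf i) ≫ (biproduct.ι Gf i ≫ e.inv) ≫ h := by
            rw [htot, Preadditive.sum_comp]; simp [Category.assoc]
        _ = ∑ i, h ≫ (v i ≫ biproduct.ι Gf i ≫ e.inv) ≫ h := by
            exact Finset.sum_congr rfl (fun i _ => hv i)
        _ = h ≫ (∑ i, v i ≫ biproduct.ι Gf i ≫ e.inv) ≫ h := by
            rw [Preadditive.sum_comp, Preadditive.comp_sum]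
  have hc : (Triangle.mk f g h).rotate.mor₂ ≫ (𝟙 (E⟦(1 : ℤ)⟧) - w ≫ h) = 0 := by
    change h ≫ (𝟙 _ - w ≫ h) = 0
    rw [Preadditive.comp_sub, Category.comp_id, ← hw, sub_self]
  obtain ⟨d, hd⟩ := Triangle.yoneda_exact₃ _ (rot_of_distTriang _ hT) _ hc
  have hd0 : d = 0 := σ.hom_zero (by linarith) hF1 hE1 d
  rw [hd0, comp_zero] at hd
  have hone : (𝟙 (E⟦(1 : ℤ)⟧) : _) = w ≫ h := sub_eq_zero.1 hd
  have h23 : (Triangle.mk f g h).rotate.mor₂ ≫ (Triangle.mk f g h).rotate.mor₃ = 0 :=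
    comp_distTriang_mor_zero₂₃ _ (rot_of_distTriang _ hT)
  have hhf : h ≫ f⟦(1 : ℤ)⟧' = 0 := by
    change h ≫ (-((shiftFunctor C (1 : ℤ)).map f)) = 0 at h23
    rw [Preadditive.comp_neg] at h23
    exact neg_eq_zero.1 h23
  have hf1 : f⟦(1 : ℤ)⟧' = 0 := by
    calc f⟦(1 : ℤ)⟧' = 𝟙 _ ≫ f⟦(1 : ℤ)⟧' := by rw [Category.id_comp]
      _ = w ≫ h ≫ f⟦(1 : ℤ)⟧' := by rw [hone, Category.assoc]
      _ = 0 := by rw [hhf, comp_zero]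
  exact (shiftFunctor C (1 : ℤ)).map_injective (by rw [Functor.map_zero]; exact hf1)

end AuxLemmas

/-- `σ` is totally semistable iff `gldim σ ≤ 1`. -/
theorem totally_semistable_iff_gldim_le_one (hKS : KrullSchmidt (C := C))
    (σ : StabilityCondition C) :
    (∀ E : C, IsIndec E → σ.IsSemistable E) ↔ σ.gldim ≤ 1 := by
  constructor
  · intro hss
    refine sSup_le ?_
    rintro d ⟨φ₁, φ₂, E, F, f, hE, hF, hf, rfl⟩
    rcases le_or_gt (φ₂ - φ₁) 1 with hle | hlt
    · rw [show (1 : EReal) = ((1 : ℝ) : EReal) by norm_cast, EReal.coe_le_coe_iff]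
      exact hle
    · exact absurd (σ.hom_zero_of_totally_semistable hKS hss hE hF hlt f) hf
  · intro hσ E hE
    exact σ.semistable_of_gldim_le_one hσ hE
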